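/- If x is a positive integer that is not equal to l_a for any natural number a, then β(x) ≤ ⌈γ(x)/2⌉. -/

import Mathlib

/-- The Lucas sequence: l 0 = 2, l 1 = 1, l (n+2) = l (n+1) + l n. -/
def lucas : ℕ → ℕ
  | 0 => 2
  | 1 => 1
  | n + 2 => lucas (n + 1) + lucas n

/-- The modified (monotone) Lucas sequence: l̃ 0 = 1, l̃ 1 = 2, l̃ n = l n for n ≥ 2. -/
def ltil : ℕ → ℕ
  | 0 => 1
  | 1 => 2
  | n + 2 => lucas (n + 2)

/-- β x : minimal number of summands in a representation of x as a sum of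
modified Lucas numbers (with repetitions allowed). -/
noncomputable def beta (x : ℕ) : ℕ :=
  sInf {s : ℕ | ∃ k : ℕ, ∃ b : ℕ → ℕ,
    x = ∑ i ∈ Finset.range (k + 1), b i * ltil i ∧ s = ∑ i ∈ Finset.range (k + 1), b i}

/-- γ x : the greatest k with l̃ k ≤ x (for x ≥ 1). -/
noncomputable def gamma (x : ℕ) : ℕ := sSup {k : ℕ | ltil k ≤ x}

/-- S a : the additive submonoid of ℕ generated by {l_a} ∪ {l_a + l_n : n ∈ ℕ}. -/
def Sset (a : ℕ) : AddSubmonoid ℕ :=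
  AddSubmonoid.closure ({lucas a} ∪ {x : ℕ | ∃ n : ℕ, x = lucas a + lucas n})

/-- T a : the additive submonoid of ℕ generated by {l_a + l_n : n ∈ ℕ}. -/
def Tset (a : ℕ) : AddSubmonoid ℕ :=
  AddSubmonoid.closure {x : ℕ | ∃ n : ℕ, x = lucas a + lucas n}

lemma lucas_pos : ∀ n, 0 < lucas n := by
  intro n
  induction n using Nat.twoStepInduction with
  | zero => decide
  | one => decide
  | more n ih _ => simp [lucas]; omega

lemma ltil_lt_succ (k : ℕ) : ltil k < ltil (k + 1) := by
  match k with
  | 0 => decide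
  | 1 => decide
  | k + 2 =>
    show lucas (k + 2) < lucas (k + 3)
    have := lucas_pos (k + 1)
    show lucas (k+2) < lucas (k+2) + lucas (k+1)
    omega

lemma ltil_strictMono : StrictMono ltil := strictMono_nat_of_lt_succ ltil_lt_succ

lemma le_ltil (k : ℕ) : k ≤ ltil k := ltil_strictMono.le_apply

lemma ltil_add_two_le (k : ℕ) : ltil (k + 2) ≤ ltil (k + 1) + ltil k := by
  match k with
  | 0 => decide
  | 1 => decide
  | k + 2 =>
    show lucas (k + 4) ≤ lucas (k + 3) + lucas (k + 2)
    show lucas (k+3) + lucas (k+2) ≤ _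
    omega

lemma ltil_is_lucas (k : ℕ) : ∃ a, ltil k = lucas a := by
  match k with
  | 0 => exact ⟨1, rfl⟩
  | 1 => exact ⟨0, rfl⟩
  | k + 2 => exact ⟨k + 2, rfl⟩

lemma lucas_is_ltil (a : ℕ) : ∃ k, lucas a = ltil k := by
  match a with
  | 0 => exact ⟨1, rfl⟩
  | 1 => exact ⟨0, rfl⟩
  | a + 2 => exact ⟨a + 2, rfl⟩

lemma gamma_spec (x : ℕ) (hx : 0 < x) :
    ltil (gamma x) ≤ x ∧ x < ltil (gamma x + 1) := by
  have hne : {k : ℕ | ltil k ≤ x}.Nonempty := ⟨0, by simp [ltil]; omega⟩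
  have hbdd : BddAbove {k : ℕ | ltil k ≤ x} :=
    ⟨x, fun k hk => le_trans (le_ltil k) hk⟩
  constructor
  · exact Nat.sSup_mem hne hbdd
  · by_contra hc
    push_neg at hc
    have : gamma x + 1 ≤ gamma x := le_csSup hbdd hc
    omega

lemma beta_repr (x : ℕ) : ∃ k : ℕ, ∃ b : ℕ → ℕ,
    x = ∑ i ∈ Finset.range (k + 1), b i * ltil i ∧
    beta x = ∑ i ∈ Finset.range (k + 1), b i := by
  have hne : {s : ℕ | ∃ k : ℕ, ∃ b : ℕ → ℕ,
      x = ∑ i ∈ Finset.range (k + 1), b i * ltil i ∧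
      s = ∑ i ∈ Finset.range (k + 1), b i}.Nonempty := by
    exact ⟨x, 0, fun _ => x, by simp [ltil]⟩
  exact Nat.sInf_mem hne

lemma beta_le (x s : ℕ) (hs : ∃ k : ℕ, ∃ b : ℕ → ℕ,
    x = ∑ i ∈ Finset.range (k + 1), b i * ltil i ∧
    s = ∑ i ∈ Finset.range (k + 1), b i) : beta x ≤ s :=
  Nat.sInf_le hs

lemma trunc_sum (k K : ℕ) (hk : k ≤ K) (f c : ℕ → ℕ) :
    ∑ i ∈ Finset.range (K + 1), (if i ≤ k then f i else 0) * c i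
      = ∑ i ∈ Finset.range (k + 1), f i * c i := by
  rw [← Finset.sum_subset (Finset.range_subset_range.2 (by omega) :
      Finset.range (k+1) ⊆ Finset.range (K+1))]
  · apply Finset.sum_congr rfl
    intro i hi
    rw [Finset.mem_range] at hi
    rw [if_pos (by omega)]
  · intro i _ hi
    rw [Finset.mem_range] at hi
    rw [if_neg (by omega), zero_mul]

lemma beta_add_le (a b : ℕ) : beta (a + b) ≤ beta a + beta b := by
  obtain ⟨k1, f, hf1, hf2⟩ := beta_repr a
  obtain ⟨k2, g, hg1, hg2⟩ := beta_repr b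
  apply beta_le
  refine ⟨max k1 k2, fun i => (if i ≤ k1 then f i else 0) + (if i ≤ k2 then g i else 0), ?_, ?_⟩
  · rw [hf1, hg1]
    simp only [add_mul, Finset.sum_add_distrib]
    rw [trunc_sum k1 (max k1 k2) (le_max_left _ _), trunc_sum k2 (max k1 k2) (le_max_right _ _)]
  · rw [hf2, hg2]
    simp only [Finset.sum_add_distrib]
    have h1 := trunc_sum k1 (max k1 k2) (le_max_left k1 k2) f (fun _ => 1)
    have h2 := trunc_sum k2 (max k1 k2) (le_max_right k1 k2) g (fun _ => 1)
    simp only [mul_one] at h1 h2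
    rw [h1, h2]

lemma beta_ltil_le (j : ℕ) : beta (ltil j) ≤ 1 := by
  apply beta_le
  refine ⟨j, fun i => if i = j then 1 else 0, ?_, ?_⟩
  · simp [ite_mul, Finset.sum_ite_eq']
  · simp

theorem beta_le_ceil_half_gamma (x : ℕ) (hx : 0 < x) (h : ∀ a : ℕ, x ≠ lucas a) :
    beta x ≤ (gamma x + 1) / 2 := by
  induction x using Nat.strong_induction_on with
  | _ x ih =>
  have v0 : ltil 0 = 1 := rfl
  have v1 : ltil 1 = 2 := rfl
  have v2 : ltil 2 = 3 := rfl
  have v3 : ltil 3 = 4 := rfl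
  have w0 : lucas 0 = 2 := rfl
  have w1 : lucas 1 = 1 := rfl
  have w2 : lucas 2 = 3 := rfl
  obtain ⟨h1, h2⟩ := gamma_spec x hx
  rcases e : gamma x with _ | _ | _ | g <;> rw [e] at h1 h2
  · rw [show (0:ℕ)+1 = 1 from rfl] at h2
    exact absurd (by omega : x = lucas 1) (h 1)
  · rw [show (0:ℕ)+1 = 1 from rfl] at h1
    rw [show (0:ℕ)+1+1 = 2 from rfl] at h2
    exact absurd (by omega : x = lucas 0) (h 0)
  · rw [show (0:ℕ)+1+1 = 2 from rfl] at h1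
    rw [show (0:ℕ)+1+1+1 = 3 from rfl] at h2
    exact absurd (by omega : x = lucas 2) (h 2)
  · -- gamma x = g + 3
    rw [show g+1+1+1 = g+3 by omega] at h1
    rw [show g+1+1+1+1 = g+4 by omega] at h2
    obtain ⟨a, ha⟩ := ltil_is_lucas (g + 3)
    have hne : x ≠ ltil (g + 3) := ha ▸ h a
    have hlt : ltil (g + 3) < x := lt_of_le_of_ne h1 (Ne.symm hne)
    set y := x - ltil (g + 3) with hy
    have hy1 : 0 < y := by omega
    have hxy : x = ltil (g + 3) + y := by omega
    have hyb : y < ltil (g + 2) := by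
      have h5 := ltil_add_two_le (g + 2)
      rw [show g+2+1 = g+3 by omega, show g+2+2 = g+4 by omega] at h5
      omega
    by_cases hyl : ∃ j, y = ltil j
    · obtain ⟨j, hj⟩ := hyl
      have : beta x ≤ 2 := by
        calc beta x ≤ beta (ltil (g+3)) + beta y := hxy ▸ beta_add_le _ _
        _ ≤ 1 + 1 := add_le_add (beta_ltil_le _) (hj ▸ beta_ltil_le j)
        _ = 2 := rfl
      omega
    · push_neg at hyl
      have hyl' : ∀ a : ℕ, y ≠ lucas a := by
        intro a' ha'
        obtain ⟨k, hk⟩ := lucas_is_ltil a'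
        exact hyl k (ha' ▸ hk)
      have hylt : y < x := by have := lucas_pos a; omega
      have hby := ih y hylt hy1 hyl'
      have hgy : gamma y ≤ g + 1 := by
        by_contra hc
        push_neg at hc
        have h6 : ltil (g+2) ≤ ltil (gamma y) := ltil_strictMono.monotone (by omega)
        have h7 := (gamma_spec y hy1).1
        omega
      have : beta x ≤ 1 + beta y := by
        calc beta x ≤ beta (ltil (g+3)) + beta y := hxy ▸ beta_add_le _ _
        _ ≤ 1 + beta y := add_le_add_left (beta_ltil_le _) _
      omega
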